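/- Fix η ∈ (0, 1/2), a real V, v ∈ [−1,1], and reals f₁, f₂ with 1 ≤ f₁ ≤ f₂. Then (exp(η(V+v)/f₂) + exp(−η(V+v)/f₂)) − (exp(ηV/f₁) + exp(−ηV/f₁)) ≤ η·v·(exp(ηV/f₁) − exp(−ηV/f₁))/f₁ + (2η²/f₁²)·(exp(ηV/f₁) + exp(−ηV/f₁)). -/
import Mathlib

lemma exp_quad_bound (x : ℝ) (hx : |x| ≤ 1/2) :
    Real.exp x ≤ 1 + x + 2 * x ^ 2 := by
  have h1 : |x| < 1 := lt_of_le_of_lt hx (by norm_num)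
  have h2 : 1 - x ≤ Real.exp (-x) := by
    have := Real.add_one_le_exp (-x); linarith
  have h3 : Real.exp x * (1 - x) ≤ 1 := by
    calc Real.exp x * (1 - x) ≤ Real.exp x * Real.exp (-x) := by
          have := Real.exp_pos x; nlinarith
      _ = 1 := by rw [← Real.exp_add]; simp
  have hx1 : x ≤ 1/2 := le_of_abs_le hx
  have hx0 : 0 < 1 - x := by
    have := neg_abs_le x; linarith
  have key : (1 + x + 2 * x ^ 2) * (1 - x) ≥ 1 := by nlinarith
  have hep := Real.exp_pos x
  nlinarith [mul_pos hep hx0]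

theorem surrogate_loss_increase (η V v f₁ f₂ : ℝ)
    (hη0 : 0 < η) (hη : η < 1/2) (hv : v ∈ Set.Icc (-1 : ℝ) 1)
    (hf₁ : 1 ≤ f₁) (hf₁₂ : f₁ ≤ f₂) :
    (Real.exp (η * (V + v) / f₂) + Real.exp (-(η * (V + v) / f₂)))
      - (Real.exp (η * V / f₁) + Real.exp (-(η * V / f₁)))
    ≤ η * v * (Real.exp (η * V / f₁) - Real.exp (-(η * V / f₁))) / f₁
      + (2 * η ^ 2 / f₁ ^ 2) *
        (Real.exp (η * V / f₁) + Real.exp (-(η * V / f₁))) := by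
  obtain ⟨hv1, hv2⟩ := hv
  have hf₁0 : (0:ℝ) < f₁ := lt_of_lt_of_le one_pos hf₁
  have hf₂0 : (0:ℝ) < f₂ := lt_of_lt_of_le hf₁0 hf₁₂
  set a := η * V / f₁ with ha
  set b := η * v / f₁ with hb
  -- step 1: replace f₂ by f₁ via cosh monotonicity
  have step1 : Real.exp (η * (V + v) / f₂) + Real.exp (-(η * (V + v) / f₂))
      ≤ Real.exp (a + b) + Real.exp (-(a + b)) := by
    have habs : |η * (V + v) / f₂| ≤ |a + b| := by
      have hab : a + b = η * (V + v) / f₁ := by rw [ha, hb]; ring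
      rw [hab, abs_div, abs_div, abs_of_pos hf₁0, abs_of_pos hf₂0]
      exact div_le_div_of_nonneg_left (abs_nonneg _) hf₁0 hf₁₂
    have := Real.cosh_le_cosh.2 habs
    rw [Real.cosh_eq, Real.cosh_eq] at this
    linarith
  -- step 2: quadratic exp bounds
  have hbabs : |b| ≤ 1/2 := by
    rw [hb, abs_div, abs_of_pos hf₁0, abs_mul, abs_of_pos hη0]
    have hvabs : |v| ≤ 1 := abs_le.2 ⟨hv1, hv2⟩
    have : η * |v| ≤ η := by nlinarith
    calc η * |v| / f₁ ≤ η * |v| / 1 := by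
          apply div_le_div_of_nonneg_left (by positivity) one_pos hf₁
      _ = η * |v| := by ring
      _ ≤ η := this
      _ ≤ 1/2 := le_of_lt hη
  have e1 : Real.exp (a + b) ≤ Real.exp a * (1 + b + 2 * b ^ 2) := by
    rw [Real.exp_add]
    exact mul_le_mul_of_nonneg_left (exp_quad_bound b hbabs) (Real.exp_pos a).le
  have e2 : Real.exp (-(a + b)) ≤ Real.exp (-a) * (1 + -b + 2 * b ^ 2) := by
    have : Real.exp (-(a+b)) = Real.exp (-a) * Real.exp (-b) := by
      rw [← Real.exp_add]; ring_nf
    rw [this]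
    have := exp_quad_bound (-b) (by rwa [abs_neg])
    have h2 : Real.exp (-b) ≤ 1 + -b + 2 * b ^ 2 := by
      convert this using 2; ring
    exact mul_le_mul_of_nonneg_left h2 (Real.exp_pos (-a)).le
  -- combine
  have hb2 : b ^ 2 ≤ η ^ 2 / f₁ ^ 2 := by
    rw [hb, div_pow, mul_pow]
    apply div_le_div_of_nonneg_right ?_ (by positivity)
    nlinarith [mul_nonneg (sq_nonneg η) (mul_nonneg (by linarith : (0:ℝ) ≤ 1 - v) (by linarith : (0:ℝ) ≤ 1 + v))]
  have hrw1 : η * v * (Real.exp a - Real.exp (-a)) / f₁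
      = b * (Real.exp a - Real.exp (-a)) := by rw [hb]; ring
  have hpa := Real.exp_pos a
  have hpna := Real.exp_pos (-a)
  have : Real.exp (a + b) + Real.exp (-(a + b)) - (Real.exp a + Real.exp (-a))
      ≤ η * v * (Real.exp a - Real.exp (-a)) / f₁
        + (2 * η ^ 2 / f₁ ^ 2) * (Real.exp a + Real.exp (-a)) := by
    rw [hrw1]
    have h2b : 2 * b ^ 2 * (Real.exp a + Real.exp (-a))
        ≤ (2 * η ^ 2 / f₁ ^ 2) * (Real.exp a + Real.exp (-a)) := by
      apply mul_le_mul_of_nonneg_right ?_ (by positivity)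
      have h : 2 * η ^ 2 / f₁ ^ 2 = 2 * (η ^ 2 / f₁ ^ 2) := by ring
      rw [h]; linarith
    nlinarith
  linarith
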